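/- Fix an integer m ≥ 1 and a sign ±. Set β₀ = α₋₁ and β₁ = m(α₀ + α₁) ± α₁ = [[−m, ±1],[±1, 0]]. Then β₀ and β₁ are positive real roots of F (each has determinant −1 and is a nonnegative integer combination of the simple roots), the difference β₁ − β₀ = [[−m−1, ±1],[±1, 1]] has determinant −m−2 < −1 and hence does not lie in Φ, and the Gram matrix [[B(β₀,β₀), B(β₀,β₁)],[B(β₁,β₀), B(β₁,β₁)]] equals [[2, −m],[−m, 2]]. (These are the simple-root data of the rank 2 Kac–Moody subalgebra H(m) of F, which is hyperbolic for m ≥ 3.) -/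

import Mathlib

open Matrix

/-- The symmetric bilinear form `B(N,N') = 2bb' - ac' - a'c` on 2×2 integer matrices. -/
def B (N M : Matrix (Fin 2) (Fin 2) ℤ) : ℤ :=
  2 * N 0 1 * M 0 1 - N 0 0 * M 1 1 - M 0 0 * N 1 1

/-- The simple root `α₋₁` of `F`. -/
def αm : Matrix (Fin 2) (Fin 2) ℤ := !![1, 0; 0, -1]

/-- The simple root `α₀` of `F`. -/
def α0 : Matrix (Fin 2) (Fin 2) ℤ := !![-1, -1; -1, 0]

/-- The simple root `α₁` of `F`. -/
def α1 : Matrix (Fin 2) (Fin 2) ℤ := !![0, 1; 1, 0]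

/-- The set of roots `Φ` of `F`. -/
def Phi : Set (Matrix (Fin 2) (Fin 2) ℤ) :=
  {N | N.IsSymm ∧ N ≠ 0 ∧ -1 ≤ N.det}

/-- `N` is a positive root of `F`: a nonzero nonnegative integer combination of the
simple roots. -/
def IsPositiveRoot (N : Matrix (Fin 2) (Fin 2) ℤ) : Prop :=
  N ≠ 0 ∧ ∃ x y z : ℕ, N = (x : ℤ) • αm + (y : ℤ) • α0 + (z : ℤ) • α1

/-- `N` is a positive real root of `F`: a positive root with `det N = -1`. -/
def IsPositiveRealRoot (N : Matrix (Fin 2) (Fin 2) ℤ) : Prop :=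
  IsPositiveRoot N ∧ N.det = -1

/-- Simple-root data of the rank 2 Kac–Moody subalgebra `H(m)` of `F`: for `m ≥ 1` and
a sign `ε = ±1`, the elements `β₀ = α₋₁` and `β₁ = m(α₀+α₁) ± α₁ = [[-m,±1],[±1,0]]`
are positive real roots of `F`, the difference `β₁ - β₀ = [[-m-1,±1],[±1,1]]` has
determinant `-m-2 < -1` and hence is not in `Φ`, and the Gram matrix is
`[[2,-m],[-m,2]]` (hyperbolic for `m ≥ 3`). -/
theorem stmt_8 (m : ℤ) (hm : 1 ≤ m) (ε : ℤ) (hε : ε = 1 ∨ ε = -1)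
    (β₀ β₁ : Matrix (Fin 2) (Fin 2) ℤ)
    (hβ₀ : β₀ = αm) (hβ₁ : β₁ = m • (α0 + α1) + ε • α1) :
    β₁ = !![-m, ε; ε, 0] ∧
    IsPositiveRealRoot β₀ ∧ IsPositiveRealRoot β₁ ∧
    β₁ - β₀ = !![-m - 1, ε; ε, 1] ∧
    (β₁ - β₀).det = -m - 2 ∧ (β₁ - β₀).det < -1 ∧ β₁ - β₀ ∉ Phi ∧
    B β₀ β₀ = 2 ∧ B β₀ β₁ = -m ∧ B β₁ β₀ = -m ∧ B β₁ β₁ = 2 := by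
  subst hβ₀ hβ₁
  have hε2 : ε * ε = 1 := by rcases hε with h | h <;> subst h <;> ring
  have hεabs : ε = 1 ∨ ε = -1 := hε
  have hb1 : m • (α0 + α1) + ε • α1 = !![-m, ε; ε, 0] := by
    ext i j
    fin_cases i <;> fin_cases j <;> simp [α0, α1] <;> ring
  rw [hb1]
  have hne : (!![-m, ε; ε, 0] : Matrix (Fin 2) (Fin 2) ℤ) ≠ 0 := by
    intro h
    have := congrFun (congrFun h 0) 1
    simp at this
    rcases hε with h | h <;> omega
  have hmε : (0:ℤ) ≤ m + ε := by rcases hε with h | h <;> omega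
  refine ⟨rfl, ⟨⟨?_, 1, 0, 0, ?_⟩, ?_⟩, ⟨⟨hne, 0, m.toNat, (m + ε).toNat, ?_⟩, ?_⟩,
    ?_, ?_, ?_, ?_, ?_, ?_, ?_, ?_⟩
  · intro h
    have := congrFun (congrFun h 0) 0
    simp [αm] at this
  · ext i j; fin_cases i <;> fin_cases j <;> simp [αm, α0, α1]
  · simp [αm, Matrix.det_fin_two_of]
  · have h1 : ((m.toNat : ℤ)) = m := Int.toNat_of_nonneg (by omega)
    have h2 : (((m + ε).toNat : ℤ)) = m + ε := Int.toNat_of_nonneg hmε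
    ext i j
    fin_cases i <;> fin_cases j <;>
      simp [αm, α0, α1, h1, h2] <;> ring
  · simp [Matrix.det_fin_two_of]; linarith [hε2]
  · ext i j; fin_cases i <;> fin_cases j <;> simp [αm] <;> ring
  · simp [αm, Matrix.det_fin_two_of]; ring_nf; linarith [hε2]
  · have : ((!![-m, ε; ε, 0] : Matrix (Fin 2) (Fin 2) ℤ) - αm).det = -m - 2 := by
      simp [αm, Matrix.det_fin_two, Matrix.sub_apply]; ring_nf; linarith [hε2]
    omega
  · intro hmem
    have hdet : ((!![-m, ε; ε, 0] : Matrix (Fin 2) (Fin 2) ℤ) - αm).det = -m - 2 := by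
      simp [αm, Matrix.det_fin_two, Matrix.sub_apply]; ring_nf; linarith [hε2]
    have := hmem.2.2
    omega
  · simp [B, αm]
  · simp [B, αm]
  · simp [B, αm]
  · simp [B]; linarith [hε2]
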